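/- arXiv:1310.3341 — 2 statements merged into one kernel-verified Lean document; each statement's English description precedes it below -/
import Mathlib

section
/- The bandwidth of the (k−1)-st power of the m-cycle C_m equals 2(k−1), provided m ≥ 4k−3 (so that the power graph is not complete). -/
/-- The bandwidth of a graph: the minimum over all orderings of the vertices of the
maximum index-gap along an edge. -/
noncomputable def bandwidth {V : Type*} [Fintype V] (G : SimpleGraph V) : ℕ :=
  sInf {b | ∃ L : V ≃ Fin (Fintype.card V),
    ∀ u v, G.Adj u v → (((L u : ℕ) : ℤ) - ((L v : ℕ) : ℤ)).natAbs ≤ b}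

/-- The `r`-th power of the `m`-cycle: distinct vertices adjacent iff their cyclic
distance is at most `r` (for `r = 0` this is the edgeless graph on `m` vertices). -/
def cyclePower (m r : ℕ) : SimpleGraph (Fin m) where
  Adj i j := i ≠ j ∧ min ((i.val + m - j.val) % m) ((j.val + m - i.val) % m) ≤ r
  symm := ⟨by rintro i j ⟨hne, hd⟩; exact ⟨hne.symm, by rwa [min_comm]⟩⟩
  loopless := ⟨by rintro i ⟨h, -⟩; exact h rfl⟩

/-- The zigzag labeling of the cycle: `0, m-1, 1, m-2, 2, …`. -/
def zig (m : ℕ) (i : Fin m) : Fin m :=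
  if h : 2 * i.val < m then ⟨2 * i.val, h⟩
  else ⟨2 * (m - i.val) - 1, by have := i.isLt; omega⟩

lemma zig_injective (m : ℕ) : Function.Injective (zig m) := by
  intro i j hij
  have hi := i.isLt; have hj := j.isLt
  unfold zig at hij
  split_ifs at hij with h1 h2 h2 <;>
    simp only [Fin.mk.injEq] at hij <;> exact Fin.ext (by omega)

/-- Upper bound: the zigzag labeling witnesses bandwidth at most `2(k-1)`. -/
lemma cyclePower_bandwidth_mem (m k : ℕ) :
    ∃ L : Fin m ≃ Fin (Fintype.card (Fin m)),
      ∀ u v, (cyclePower m (k-1)).Adj u v →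
        (((L u : ℕ) : ℤ) - ((L v : ℕ) : ℤ)).natAbs ≤ 2 * (k - 1) := by
  refine ⟨(Equiv.ofBijective (zig m)
      ((Fintype.bijective_iff_injective_and_card _).mpr ⟨zig_injective m, rfl⟩)).trans
      (finCongr (Fintype.card_fin m).symm), ?_⟩
  intro u v h
  have hval : ∀ w : Fin m,
      ((((Equiv.ofBijective (zig m)
        ((Fintype.bijective_iff_injective_and_card _).mpr ⟨zig_injective m, rfl⟩)).trans
        (finCongr (Fintype.card_fin m).symm)) w : ℕ)) = (zig m w).val := by
    intro w; simp [Equiv.ofBijective]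
  rw [hval u, hval v]
  obtain ⟨hne, hd⟩ := h
  have hu := u.isLt; have hv := v.isLt
  have hne' : u.val ≠ v.val := fun h => hne (Fin.ext h)
  rcases Nat.lt_or_ge u.val v.val with hlt | hge
  · have e1 : (u.val + m - v.val) % m = u.val + m - v.val := Nat.mod_eq_of_lt (by omega)
    have e2 : (v.val + m - u.val) % m = v.val - u.val := by
      have h3 : v.val + m - u.val = (v.val - u.val) + m := by omega
      rw [h3, Nat.add_mod_right, Nat.mod_eq_of_lt (by omega)]
    rw [e1, e2] at hd
    have hd' := min_le_iff.mp hd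
    unfold zig
    split_ifs with h1 h2 h2 <;> simp only [Fin.val_mk] <;> omega
  · have hgt : v.val < u.val := by omega
    have e1 : (u.val + m - v.val) % m = u.val - v.val := by
      have h3 : u.val + m - v.val = (u.val - v.val) + m := by omega
      rw [h3, Nat.add_mod_right, Nat.mod_eq_of_lt (by omega)]
    have e2 : (v.val + m - u.val) % m = v.val + m - u.val := Nat.mod_eq_of_lt (by omega)
    rw [e1, e2] at hd
    have hd' := min_le_iff.mp hd
    unfold zig
    split_ifs with h1 h2 h2 <;> simp only [Fin.val_mk] <;> omega

/-- Lower bound: the vertex labeled `0` has `2(k-1)` neighbors, all of whose labels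
lie in `{1, …, b}`. -/
lemma cyclePower_bandwidth_lower (m k b : ℕ) (hk : 1 ≤ k) (hm : 4 * k - 3 ≤ m)
    (L : Fin m ≃ Fin (Fintype.card (Fin m)))
    (hL : ∀ u v, (cyclePower m (k-1)).Adj u v →
      (((L u : ℕ) : ℤ) - ((L v : ℕ) : ℤ)).natAbs ≤ b) :
    2 * (k - 1) ≤ b := by
  set r := k - 1 with hr
  have hm' : 2 * r + 1 ≤ m := by omega
  have hm0 : 0 < m := by omega
  set a : Fin m := L.symm ⟨0, by simp [hm0]⟩ with ha
  have hLa : (L a : ℕ) = 0 := by rw [ha, Equiv.apply_symm_apply]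
  set e : ℕ → ℕ := fun j => if j < r then j + 1 else m - 2 * r + j with he
  have he1 : ∀ j, j < 2 * r → 1 ≤ e j ∧ e j < m := by
    intro j hj; simp only [he]; split_ifs <;> omega
  have he2 : ∀ j, j < 2 * r → min (e j) (m - e j) ≤ r := by
    intro j hj; simp only [he]; split_ifs <;> simp <;> omega
  have heinj : ∀ j1 j2, j1 < 2 * r → j2 < 2 * r → e j1 = e j2 → j1 = j2 := by
    intro j1 j2 h1 h2 h; simp only [he] at h; split_ifs at h <;> omega
  set g : Fin (2 * r) → Fin m :=
    fun j => ⟨(a.val + e j.val) % m, Nat.mod_lt _ hm0⟩ with hg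
  have hmod : ∀ j : Fin (2 * r),
      ((g j).val + m - a.val) % m = e j.val ∧
      (a.val + m - (g j).val) % m = m - e j.val := by
    intro j
    obtain ⟨hd1, hd2⟩ := he1 j.val j.isLt
    have hav := a.isLt
    rcases Nat.lt_or_ge (a.val + e j.val) m with hc | hc
    · have hw : (g j).val = a.val + e j.val := Nat.mod_eq_of_lt hc
      constructor
      · rw [hw]
        have h3 : a.val + e j.val + m - a.val = e j.val + m := by omega
        rw [h3, Nat.add_mod_right, Nat.mod_eq_of_lt hd2]
      · rw [hw]
        have h3 : a.val + m - (a.val + e j.val) = m - e j.val := by omega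
        rw [h3]; exact Nat.mod_eq_of_lt (by omega)
    · have hw : (g j).val = a.val + e j.val - m := by
        show (a.val + e j.val) % m = _
        rw [Nat.mod_eq_sub_mod hc, Nat.mod_eq_of_lt (by omega)]
      constructor
      · rw [hw]
        have h3 : a.val + e j.val - m + m - a.val = e j.val := by omega
        rw [h3]; exact Nat.mod_eq_of_lt hd2
      · rw [hw]
        have h3 : a.val + m - (a.val + e j.val - m) = m + (m - e j.val) := by omega
        rw [h3, Nat.add_mod_left]; exact Nat.mod_eq_of_lt (by omega)
  have hadj : ∀ j : Fin (2 * r), (cyclePower m r).Adj a (g j) := by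
    intro j
    obtain ⟨hd1, hd2⟩ := he1 j.val j.isLt
    obtain ⟨hm1, hm2⟩ := hmod j
    refine ⟨?_, ?_⟩
    · intro hgj
      have : ((g j).val + m - a.val) % m = 0 := by
        rw [hgj]; simp [Nat.sub_add_cancel, a.isLt.le]
      omega
    · rw [hm1, hm2]
      have := he2 j.val j.isLt
      omega
  have hginj : Function.Injective g := by
    intro j1 j2 h
    have h' : (a.val + e j1.val) % m = (a.val + e j2.val) % m := congrArg Fin.val h
    have hcongr : e j1.val ≡ e j2.val [MOD m] := Nat.ModEq.add_left_cancel' a.val h'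
    have h1 := he1 j1.val j1.isLt; have h2 := he1 j2.val j2.isLt
    have : e j1.val = e j2.val := hcongr.eq_of_lt_of_lt (by omega) (by omega)
    exact Fin.ext (heinj _ _ j1.isLt j2.isLt this)
  have hlab : ∀ j : Fin (2 * r), 1 ≤ (L (g j) : ℕ) ∧ (L (g j) : ℕ) ≤ b := by
    intro j
    have hb := hL a (g j) (hadj j)
    rw [hLa] at hb
    have hne : g j ≠ a := (hadj j).1.symm
    have hLne : L (g j) ≠ L a := fun h => hne (L.injective h)
    have h0 : (L (g j) : ℕ) ≠ 0 := by
      intro h0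
      exact hLne (Fin.ext (by rw [h0, hLa]))
    omega
  set F : Fin (2 * r) → Fin b := fun j => ⟨(L (g j) : ℕ) - 1, by
    have := hlab j; omega⟩ with hF
  have hFinj : Function.Injective F := by
    intro j1 j2 h
    have h1 := hlab j1; have h2 := hlab j2
    have hv : (L (g j1) : ℕ) - 1 = (L (g j2) : ℕ) - 1 := congrArg Fin.val h
    have : L (g j1) = L (g j2) := Fin.ext (by omega)
    exact hginj (L.injective this)
  have := Fintype.card_le_of_injective F hFinj
  simpa using this

/-- The bandwidth of the `(k-1)`-st power of the `m`-cycle equals `2(k-1)`,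
provided `m ≥ 4k - 3`. -/
theorem stmt_6 (m k : ℕ) (hk : 1 ≤ k) (hm : 4 * k - 3 ≤ m) :
    bandwidth (cyclePower m (k - 1)) = 2 * (k - 1) := by
  unfold bandwidth
  apply le_antisymm
  · exact Nat.sInf_le (cyclePower_bandwidth_mem m k)
  · exact le_csInf ⟨2 * (k - 1), cyclePower_bandwidth_mem m k⟩
      (fun b ⟨L, hL⟩ => cyclePower_bandwidth_lower m k b hk hm L hL)
end

section
/- Let H be a graph on m vertices whose complement has bandwidth b under the ordering h_1,…,h_m, and let φ, ψ be partial homomorphisms from G to H_k := H[{h_1,…,h_k}] (k ≤ m) that map exactly the same set of vertices of G, and agree on all vertices mapped to h_{k−b+1},…,h_k. If a vertex v of G can be added to φ by mapping it to h_{k+1} (k < m) yielding a partial homomorphism, then v can likewise be added to ψ mapped to h_{k+1}. -/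
/-- `φ` is a partial homomorphism from `G` to `H`: whenever both endpoints of an edge
are mapped, their images are adjacent. -/
def PartialHom {V W : Type*} (G : SimpleGraph V) (H : SimpleGraph W)
    (φ : V → Option W) : Prop :=
  ∀ u v, G.Adj u v → ∀ a b, φ u = some a → φ v = some b → H.Adj a b

/-- Suppose the identity ordering of `H` (on `Fin m`) achieves bandwidth `b` of the
complement of `H`, and `φ, ψ` are partial homomorphisms from `G` to `H_k` (the first `k`
vertices of `H`) with the same domain which agree on all vertices mapped to the last `b`
of the first `k` vertices. If `v` (unmapped) can be added to `φ` mapped to `h_{k+1}`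
yielding a partial homomorphism, then the same holds for `ψ`. -/
theorem stmt_18 {V : Type*} {m : ℕ} (G : SimpleGraph V) (H : SimpleGraph (Fin m))
    (b k : ℕ) (hk : k < m)
    (hb : ∀ i j : Fin m, Hᶜ.Adj i j → (((i : ℕ) : ℤ) - ((j : ℕ) : ℤ)).natAbs ≤ b)
    (φ ψ : V → Option (Fin m))
    (hφ : PartialHom G H φ) (hψ : PartialHom G H ψ)
    (hφk : ∀ v a, φ v = some a → (a : ℕ) < k)
    (hψk : ∀ v a, ψ v = some a → (a : ℕ) < k)
    (hdom : ∀ v, φ v = none ↔ ψ v = none)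
    (hagree₁ : ∀ v a, φ v = some a → k - b ≤ (a : ℕ) → ψ v = some a)
    (hagree₂ : ∀ v a, ψ v = some a → k - b ≤ (a : ℕ) → φ v = some a)
    (v : V) (hv : φ v = none)
    (hext : ∀ u, G.Adj v u → ∀ a, φ u = some a → H.Adj a ⟨k, hk⟩) :
    ψ v = none ∧ ∀ u, G.Adj v u → ∀ a, ψ u = some a → H.Adj a ⟨k, hk⟩ := by
  refine ⟨(hdom v).mp hv, fun u hu a ha => ?_⟩
  have hak : (a : ℕ) < k := hψk u a ha
  by_contra hadj
  have hne : a ≠ ⟨k, hk⟩ := by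
    intro h; subst h; exact absurd hak (lt_irrefl _)
  have hcadj : Hᶜ.Adj a ⟨k, hk⟩ := ⟨hne, hadj⟩
  have hband := hb a ⟨k, hk⟩ hcadj
  simp only [Fin.val_mk] at hband
  have hge : k - b ≤ (a : ℕ) := by omega
  exact hadj (hext u hu a (hagree₂ u a ha hge))
end
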